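/- If n = p₁^{r₁}⋯p_t^{r_t} with t ≥ 2 distinct primes and 3 ≤ p₁ < ⋯ < p_t, then the independence number of the unitary Cayley graph of Z_n equals n/p₁ = p₁^{r₁-1} p₂^{r₂} ⋯ p_t^{r_t}. -/

import Mathlib

/-- The unitary Cayley graph of a commutative ring: vertices are ring elements,
with `x ~ y` iff `x ≠ y` and `x - y` is a unit. -/
def unitaryCayley (R : Type*) [CommRing R] : SimpleGraph R where
  Adj x y := x ≠ y ∧ IsUnit (x - y)
  symm := ⟨by
    rintro x y ⟨hne, hu⟩
    exact ⟨hne.symm, by simpa [neg_sub] using hu.neg⟩⟩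
  loopless := ⟨by rintro x ⟨h, -⟩; exact h rfl⟩

/-- A packing `k`-coloring: every vertex gets a color in `{1, …, k}`, and any two
distinct vertices with the same color `i` are at distance greater than `i`
(`edist` equals `⊤` for unreachable pairs, which counts as distance greater than `i`). -/
def SimpleGraph.IsPackingColoring {V : Type*} (G : SimpleGraph V) (k : ℕ) (c : V → ℕ) : Prop :=
  (∀ v, 1 ≤ c v ∧ c v ≤ k) ∧
    ∀ u v, u ≠ v → c u = c v → (c u : ℕ∞) < G.edist u v

/-- The packing chromatic number: the least `k` admitting a packing `k`-coloring. -/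
noncomputable def SimpleGraph.packingChromaticNumber {V : Type*} (G : SimpleGraph V) : ℕ :=
  sInf {k | ∃ c : V → ℕ, G.IsPackingColoring k c}

/-- The independence number: the largest cardinality of a set of pairwise
nonadjacent vertices. -/
noncomputable def SimpleGraph.indepNumber {V : Type*} (G : SimpleGraph V) : ℕ :=
  sSup {n | ∃ s : Finset V, (∀ u ∈ s, ∀ v ∈ s, u ≠ v → ¬ G.Adj u v) ∧ s.card = n}

/-- The tensor (direct, categorical) product of two simple graphs. -/
def tensorProd {V W : Type*} (G : SimpleGraph V) (H : SimpleGraph W) :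
    SimpleGraph (V × W) where
  Adj a b := G.Adj a.1 b.1 ∧ H.Adj a.2 b.2
  symm := ⟨fun _ _ ⟨h1, h2⟩ => ⟨h1.symm, h2.symm⟩⟩
  loopless := ⟨fun a h => G.irrefl h.1⟩

/-- The tensor (direct, categorical) product of a family of simple graphs. -/
def tensorPi {ι : Type*} [Nonempty ι] {V : ι → Type*} (G : ∀ i, SimpleGraph (V i)) :
    SimpleGraph (∀ i, V i) where
  Adj a b := ∀ i, (G i).Adj (a i) (b i)
  symm := ⟨fun _ _ h i => (h i).symm⟩
  loopless := ⟨fun a h => (G (Classical.arbitrary ι)).irrefl (h _)⟩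

lemma coprime_of_lt_minFac {m n : ℕ} (h0 : 0 < m) (h : m < n.minFac) : Nat.Coprime m n := by
  by_contra h'
  have hg1 : Nat.gcd m n ≠ 1 := h'
  set q := (Nat.gcd m n).minFac with hq
  have hqp : q.Prime := Nat.minFac_prime hg1
  have hqm : q ∣ m := (Nat.minFac_dvd _).trans (Nat.gcd_dvd_left _ _)
  have hqn : q ∣ n := (Nat.minFac_dvd _).trans (Nat.gcd_dvd_right _ _)
  have h1 : n.minFac ≤ q := Nat.minFac_le_of_dvd hqp.two_le hqn
  have h2 : q ≤ m := Nat.le_of_dvd h0 hqm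
  omega

theorem stmt9 (n : ℕ) (ht : 2 ≤ n.primeFactors.card) (hodd : 3 ≤ n.minFac) :
    (unitaryCayley (ZMod n)).indepNumber = n / n.minFac := by
  classical
  set p := n.minFac with hp
  have hn2 : 2 ≤ n := by
    by_contra h
    interval_cases n <;> simp_all
  haveI : NeZero n := ⟨by omega⟩
  have hpp : p.Prime := Nat.minFac_prime (by omega)
  have hpn : p ∣ n := Nat.minFac_dvd n
  have hple : p ≤ n := Nat.le_of_dvd (by omega) hpn
  have hpe : p * (n / p) = n := Nat.mul_div_cancel' hpn
  -- lower bound set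
  set s : Finset (ZMod n) := (Finset.range (n / p)).image
      (fun k : ℕ => ((p * k : ℕ) : ZMod n)) with hs
  have hval : ∀ k ∈ Finset.range (n / p), ((p * k : ℕ) : ZMod n).val = p * k := by
    intro k hk
    rw [ZMod.val_natCast, Nat.mod_eq_of_lt]
    calc p * k < p * (n / p) := by
          exact (Nat.mul_lt_mul_left hpp.pos).mpr (Finset.mem_range.mp hk)
      _ = n := hpe
  have hinj : Set.InjOn (fun k : ℕ => ((p * k : ℕ) : ZMod n)) (Finset.range (n / p)) := by
    intro a ha b hb hab
    have ha' : a ∈ Finset.range (n / p) := ha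
    have hb' : b ∈ Finset.range (n / p) := hb
    have hv : ((p * a : ℕ) : ZMod n).val = ((p * b : ℕ) : ZMod n).val :=
      congrArg ZMod.val hab
    rw [hval a ha', hval b hb'] at hv
    exact Nat.eq_of_mul_eq_mul_left hpp.pos hv
  have hscard : s.card = n / p := by
    rw [hs, Finset.card_image_of_injOn hinj, Finset.card_range]
  have hsind : ∀ u ∈ s, ∀ v ∈ s, u ≠ v → ¬ (unitaryCayley (ZMod n)).Adj u v := by
    rintro u hu v hv hne ⟨-, hunit⟩
    simp only [hs, Finset.mem_image] at hu hv
    obtain ⟨a, ha, rfl⟩ := hu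
    obtain ⟨b, hb, rfl⟩ := hv
    have h0 : (ZMod.castHom hpn (ZMod p)) (((p * a : ℕ) : ZMod n) - ((p * b : ℕ) : ZMod n))
        = 0 := by
      rw [map_sub, map_natCast, map_natCast, Nat.cast_mul, Nat.cast_mul,
        ZMod.natCast_self, zero_mul, zero_mul, sub_self]
    haveI : Fact p.Prime := ⟨hpp⟩
    exact not_isUnit_zero (h0 ▸ hunit.map (ZMod.castHom hpn (ZMod p)))
  -- clique
  have key : ∀ a b : ℕ, b < a → a < p → IsUnit ((a : ZMod n) - (b : ZMod n)) := by
    intro a b hba hap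
    rw [← Nat.cast_sub hba.le]
    rw [ZMod.isUnit_iff_coprime]
    exact coprime_of_lt_minFac (by omega) (by omega)
  set K : Finset (ZMod n) := (Finset.range p).image (fun i : ℕ => ((i : ℕ) : ZMod n)) with hK
  have hKinj : Set.InjOn (fun i : ℕ => ((i : ℕ) : ZMod n)) (Finset.range p) := by
    intro a ha b hb hab
    have ha' : a ∈ Finset.range p := ha
    have hb' : b ∈ Finset.range p := hb
    have hv : ((a : ℕ) : ZMod n).val = ((b : ℕ) : ZMod n).val := congrArg ZMod.val hab
    rwa [ZMod.val_natCast, ZMod.val_natCast,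
      Nat.mod_eq_of_lt (lt_of_lt_of_le (Finset.mem_range.mp ha') hple),
      Nat.mod_eq_of_lt (lt_of_lt_of_le (Finset.mem_range.mp hb') hple)] at hv
  have hKcard : K.card = p := by
    rw [hK, Finset.card_image_of_injOn hKinj, Finset.card_range]
  have hKclique : ∀ u ∈ K, ∀ v ∈ K, u ≠ v → IsUnit (u - v) := by
    intro u hu v hv hne
    simp only [hK, Finset.mem_image, Finset.mem_range] at hu hv
    obtain ⟨a, ha, rfl⟩ := hu
    obtain ⟨b, hb, rfl⟩ := hv
    rcases Nat.lt_trichotomy a b with h | h | h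
    · simpa [neg_sub] using (key b a h hb).neg
    · exact absurd (by rw [h]) hne
    · exact key a b h ha
  -- upper bound for any independent set
  have hub : ∀ t : Finset (ZMod n),
      (∀ u ∈ t, ∀ v ∈ t, u ≠ v → ¬ (unitaryCayley (ZMod n)).Adj u v) → t.card ≤ n / p := by
    intro t hind
    have hinj2 : Set.InjOn (fun q : ZMod n × ZMod n => q.1 - q.2) ↑(K ×ˢ t) := by
      rintro ⟨k₁, x₁⟩ h₁ ⟨k₂, x₂⟩ h₂ heq
      rw [Finset.mem_coe, Finset.mem_product] at h₁ h₂
      simp only at heq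
      by_cases hk : k₁ = k₂
      · subst hk
        have hx : x₁ = x₂ := by linear_combination -heq
        rw [hx]
      · exfalso
        have hx : x₁ - x₂ = k₁ - k₂ := by linear_combination -heq
        have hxne : x₁ ≠ x₂ := by
          intro h
          apply hk
          rw [h, sub_self] at hx
          exact (sub_eq_zero.mp hx.symm)
        exact hind x₁ h₁.2 x₂ h₂.2 hxne ⟨hxne, hx ▸ hKclique k₁ h₁.1 k₂ h₂.1 hk⟩
    have hcard : (K ×ˢ t).card ≤ Fintype.card (ZMod n) := by
      calc (K ×ˢ t).card
          = ((K ×ˢ t).image (fun q : ZMod n × ZMod n => q.1 - q.2)).card :=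
            (Finset.card_image_of_injOn hinj2).symm
        _ ≤ (Finset.univ : Finset (ZMod n)).card := Finset.card_le_card (Finset.subset_univ _)
        _ = Fintype.card (ZMod n) := rfl
    rw [Finset.card_product, hKcard, ZMod.card] at hcard
    rw [Nat.le_div_iff_mul_le hpp.pos, mul_comm]
    exact hcard
  -- conclude
  unfold SimpleGraph.indepNumber
  apply le_antisymm
  · exact csSup_le ⟨n / p, s, hsind, hscard⟩ (by rintro m ⟨t, hind, rfl⟩; exact hub t hind)
  · exact le_csSup ⟨n / p, by rintro m ⟨t, hind, rfl⟩; exact hub t hind⟩ ⟨s, hsind, hscard⟩
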